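/- arXiv:2106.05944 — 2 statements merged into one kernel-verified Lean document; each statement's English description precedes it below -/
import Mathlib

section
/- Let D be an n×n strict circular Robinson dissimilarity matrix, let I be a proper arc of [n] with 2 ≤ |I| ≤ n−2, and let σ_I be the permutation of [n] that reverses I. Suppose the matrix (i,j) ↦ D(σ_I(i), σ_I(j)) is circular Robinson. Then for every i ∉ I, every maximizer of j ↦ D(i,j) over j ∈ [n] lies in I; and for every i ∈ I, every maximizer of j ↦ D(i,j) over j ∈ [n] lies in Iᶜ. -/
/-- The standard cyclic order on `Fin n`. -/
def CycOrd {n : ℕ} (i j k : Fin n) : Prop :=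
  (i < j ∧ j < k) ∨ (j < k ∧ k < i) ∨ (k < i ∧ i < j)

/-- `i,j,k,l` are pairwise distinct and cyclically ordered. -/
def CycOrd4 {n : ℕ} (i j k l : Fin n) : Prop :=
  i ≠ j ∧ i ≠ k ∧ i ≠ l ∧ j ≠ k ∧ j ≠ l ∧ k ≠ l ∧ CycOrd i j k ∧ CycOrd i k l

/-- `D` is a dissimilarity matrix. -/
def IsDissim {n : ℕ} (D : Fin n → Fin n → ℝ) : Prop :=
  (∀ i j, D i j = D j i) ∧ (∀ i j, 0 ≤ D i j) ∧ (∀ i, D i i = 0)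

/-- `D` is a circular Robinson matrix. -/
def CircRobinson {n : ℕ} (D : Fin n → Fin n → ℝ) : Prop :=
  ∀ i j k l : Fin n, CycOrd4 i j k l → min (D j k) (D k l) ≤ D i k

/-- `D` is a strict circular Robinson matrix. -/
def StrictCircRobinson {n : ℕ} (D : Fin n → Fin n → ℝ) : Prop :=
  ∀ i j k l : Fin n, CycOrd4 i j k l → min (D j k) (D k l) < D i k

open Fin.NatCast in
/-- The arc `{a, a+1, …, a+k}` (mod `n`) of `Fin n`. -/
def arcSet (n : ℕ) [NeZero n] (a : Fin n) (k : ℕ) : Set (Fin n) :=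
  {x | ∃ t : ℕ, t ≤ k ∧ x = a + (t : Fin n)}

open Fin.NatCast in
open Classical in
/-- The permutation of `Fin n` reversing the arc `{a, …, a+k}`. -/
noncomputable def arcRev (n : ℕ) [NeZero n] (a : Fin n) (k : ℕ) (x : Fin n) : Fin n :=
  if (∃ t : ℕ, t ≤ k ∧ x = a + (t : Fin n)) then a + (k : Fin n) - (x - a) else x

open Fin.NatCast

section AuxLemmas

variable {n : ℕ} [NeZero n]

lemma fin_add_val (a : Fin n) (t : ℕ) (ht : t < n) :
    (a.val + t < n ∧ (a + (t : Fin n)).val = a.val + t) ∨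
      (n ≤ a.val + t ∧ (a + (t : Fin n)).val = a.val + t - n) := by
  have ha := a.isLt
  have h1 : (a + (t : Fin n)).val = (a.val + t) % n := by
    simp [Fin.add_def, Fin.val_cast_of_lt ht]
  rcases Nat.lt_or_ge (a.val + t) n with h | h
  · exact Or.inl ⟨h, by rw [h1, Nat.mod_eq_of_lt h]⟩
  · exact Or.inr ⟨h, by rw [h1, Nat.mod_eq_sub_mod h, Nat.mod_eq_of_lt (by omega)]⟩

lemma cyc4 (a : Fin n) (p q r s : ℕ) (hp : p < n) (hq : q < n) (hr : r < n) (hs : s < n)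
    (hcyc : (p < q ∧ q < r ∧ r < s) ∨ (q < r ∧ r < s ∧ s < p) ∨
            (r < s ∧ s < p ∧ p < q) ∨ (s < p ∧ p < q ∧ q < r)) :
    CycOrd4 (a + (p : Fin n)) (a + (q : Fin n)) (a + (r : Fin n)) (a + (s : Fin n)) := by
  have ha := a.isLt
  obtain ⟨P, hP1, hP2⟩ : ∃ P, (a + (p : Fin n)).val = P ∧
      ((a.val + p < n ∧ P = a.val + p) ∨ (n ≤ a.val + p ∧ P = a.val + p - n)) :=
    ⟨_, rfl, fin_add_val a p hp⟩
  obtain ⟨Q, hQ1, hQ2⟩ : ∃ Q, (a + (q : Fin n)).val = Q ∧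
      ((a.val + q < n ∧ Q = a.val + q) ∨ (n ≤ a.val + q ∧ Q = a.val + q - n)) :=
    ⟨_, rfl, fin_add_val a q hq⟩
  obtain ⟨R, hR1, hR2⟩ : ∃ R, (a + (r : Fin n)).val = R ∧
      ((a.val + r < n ∧ R = a.val + r) ∨ (n ≤ a.val + r ∧ R = a.val + r - n)) :=
    ⟨_, rfl, fin_add_val a r hr⟩
  obtain ⟨S, hS1, hS2⟩ : ∃ S, (a + (s : Fin n)).val = S ∧
      ((a.val + s < n ∧ S = a.val + s) ∨ (n ≤ a.val + s ∧ S = a.val + s - n)) :=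
    ⟨_, rfl, fin_add_val a s hs⟩
  have hP3 : P < n := hP1 ▸ (a + (p : Fin n)).isLt
  have hQ3 : Q < n := hQ1 ▸ (a + (q : Fin n)).isLt
  have hR3 : R < n := hR1 ▸ (a + (r : Fin n)).isLt
  have hS3 : S < n := hS1 ▸ (a + (s : Fin n)).isLt
  unfold CycOrd4 CycOrd
  simp only [ne_eq, Fin.ext_iff, Fin.lt_def, hP1, hQ1, hR1, hS1]
  omega

lemma mem_arcSet_iff (a : Fin n) (k : ℕ) (hk : k < n) (x : Fin n) :
    x ∈ arcSet n a k ↔ (x - a).val ≤ k := by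
  constructor
  · rintro ⟨t, ht, rfl⟩
    rw [add_sub_cancel_left, Fin.val_cast_of_lt (by omega)]
    exact ht
  · intro h
    refine ⟨(x - a).val, h, ?_⟩
    rw [Fin.cast_val_eq_self]
    abel

lemma not_mem_arc (a : Fin n) (k t : ℕ) (hkn : k < n) (htn : t < n) (hkt : k < t) :
    a + (t : Fin n) ∉ arcSet n a k := by
  rw [mem_arcSet_iff a k hkn, add_sub_cancel_left, Fin.val_cast_of_lt htn]
  omega

lemma arcRev_not_mem (a : Fin n) (k : ℕ) (x : Fin n) (h : x ∉ arcSet n a k) :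
    arcRev n a k x = x := by
  unfold arcRev
  exact if_neg h

lemma arcRev_mem (a : Fin n) (k : ℕ) (hk : k < n) (t : ℕ) (ht : t ≤ k) :
    arcRev n a k (a + (t : Fin n)) = a + ((k - t : ℕ) : Fin n) := by
  unfold arcRev
  rw [if_pos ⟨t, ht, rfl⟩, add_sub_cancel_left]
  have h : ((k - t : ℕ) : Fin n) + (t : Fin n) = (k : Fin n) := by
    rw [← Nat.cast_add]
    congr 1
    omega
  rw [← h]
  abel

lemma row_pos (D : Fin n → Fin n → ℝ) (hnn : ∀ i j, 0 ≤ D i j)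
    (hR : StrictCircRobinson D) (a : Fin n) (k : ℕ) (hk1 : 1 ≤ k) (hk3 : k + 3 ≤ n)
    (i : Fin n) (hle : ∀ y, D i y ≤ 0) : False := by
  obtain ⟨p, hpn, hiv⟩ : ∃ p, p < n ∧ i = a + (p : Fin n) :=
    ⟨(i - a).val, (i - a).isLt, by rw [Fin.cast_val_eq_self]; abel⟩
  have main : ∀ x y z : Fin n, CycOrd4 i x y z → False := by
    intro x y z hQ
    have hs := hR i x y z hQ
    have h1 := hle y
    have h2 := hnn x y
    have h3 := hnn y z
    rcases min_cases (D x y) (D y z) with ⟨h4, h5⟩ | ⟨h4, h5⟩ <;> linarith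
  rcases Nat.lt_or_ge p k with h | h
  · have hQ := cyc4 a p k (k+1) (n-1) hpn (by omega) (by omega) (by omega) (by omega)
    rw [← hiv] at hQ
    exact main _ _ _ hQ
  · rcases Nat.eq_or_lt_of_le h with h' | h'
    · have hQ := cyc4 a p (k+1) (n-1) 0 hpn (by omega) (by omega) (by omega) (by omega)
      rw [← hiv] at hQ
      exact main _ _ _ hQ
    · rcases Nat.lt_or_ge p (n-1) with h'' | h''
      · have hQ := cyc4 a p (n-1) 0 k hpn (by omega) (by omega) (by omega) (by omega)
        rw [← hiv] at hQ
        exact main _ _ _ hQ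
      · have hQ := cyc4 a p 0 k (k+1) hpn (by omega) (by omega) (by omega) (by omega)
        rw [← hiv] at hQ
        exact main _ _ _ hQ

end AuxLemmas

/-- If reversing the arc `I = {a, …, a+k}` (of size between 2 and n-2) of a strict
circular Robinson matrix yields a circular Robinson matrix, then points outside
`I` attain their maximal dissimilarity only inside `I`, and points inside `I`
attain it only in `Iᶜ`. -/
theorem statement13 (n : ℕ) [NeZero n] (D : Fin n → Fin n → ℝ)
    (hD : IsDissim D) (hR : StrictCircRobinson D)
    (a : Fin n) (k : ℕ) (hk1 : 1 ≤ k) (hk2 : k + 1 ≤ n - 2)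
    (hrev : CircRobinson (fun i j => D (arcRev n a k i) (arcRev n a k j))) :
    (∀ i ∉ arcSet n a k, ∀ j : Fin n,
      (∀ j' : Fin n, D i j' ≤ D i j) → j ∈ arcSet n a k) ∧
    (∀ i ∈ arcSet n a k, ∀ j : Fin n,
      (∀ j' : Fin n, D i j' ≤ D i j) → j ∉ arcSet n a k) := by
  have hn1 : 1 ≤ n := Nat.one_le_iff_ne_zero.2 (NeZero.ne n)
  have hk3 : k + 3 ≤ n := by omega
  have hkn : k < n := by omega
  have hsub : ∀ x : Fin n, x = a + ((x - a).val : Fin n) := fun x => by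
    rw [Fin.cast_val_eq_self]; abel
  have hsa : arcRev n a k a = a + (k : Fin n) := by
    have h := arcRev_mem a k hkn 0 (Nat.zero_le k)
    simpa using h
  have hsb : arcRev n a k (a + (k : Fin n)) = a := by
    have h := arcRev_mem a k hkn k le_rfl
    simpa using h
  constructor
  · intro i hi j hmax
    by_contra hj
    obtain ⟨pI, hpIn, hiv⟩ : ∃ p, p < n ∧ i = a + (p : Fin n) :=
      ⟨(i - a).val, (i - a).isLt, hsub i⟩
    obtain ⟨pJ, hpJn, hjv⟩ : ∃ p, p < n ∧ j = a + (p : Fin n) :=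
      ⟨(j - a).val, (j - a).isLt, hsub j⟩
    have hki : k < pI := by
      by_contra h
      exact hi ⟨pI, by omega, hiv⟩
    have hkj : k < pJ := by
      by_contra h
      exact hj ⟨pJ, by omega, hjv⟩
    have hsi : arcRev n a k i = i := arcRev_not_mem a k i hi
    have hsj : arcRev n a k j = j := arcRev_not_mem a k j hj
    rcases Nat.lt_trichotomy pI pJ with h | h | h
    · have hQ := cyc4 a 0 k pI pJ (by omega) hkn hpIn hpJn (by omega)
      have h0 : a + ((0 : ℕ) : Fin n) = a := by simp
      rw [h0, ← hiv, ← hjv] at hQ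
      have hS := hR _ _ _ _ hQ
      have hE := hrev _ _ _ _ hQ
      dsimp only at hE
      rw [hsb, hsa, hsi, hsj] at hE
      have m1 := hmax a
      have e2 := hD.1 a i
      rcases min_cases (D (a + (k : Fin n)) i) (D i j) with ⟨u1, u2⟩ | ⟨u1, u2⟩ <;>
        rcases min_cases (D a i) (D i j) with ⟨v1, v2⟩ | ⟨v1, v2⟩ <;> linarith
    · exact row_pos D hD.2.1 hR a k hk1 hk3 i (fun y => by
        have hy := hmax y
        have hij : i = j := by rw [hiv, hjv, h]
        rw [← hij, hD.2.2] at hy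
        exact hy)
    · have hQ := cyc4 a k pJ pI 0 hkn hpJn hpIn (by omega) (by omega)
      have h0 : a + ((0 : ℕ) : Fin n) = a := by simp
      rw [h0, ← hiv, ← hjv] at hQ
      have hS := hR _ _ _ _ hQ
      have hE := hrev _ _ _ _ hQ
      dsimp only at hE
      rw [hsb, hsa, hsi, hsj] at hE
      have m1 := hmax a
      have m2 := hmax (a + (k : Fin n))
      have e1 := hD.1 j i
      have e2 := hD.1 a i
      have e3 := hD.1 (a + (k : Fin n)) i
      rcases min_cases (D j i) (D i a) with ⟨u1, u2⟩ | ⟨u1, u2⟩ <;>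
        rcases min_cases (D j i) (D i (a + (k : Fin n))) with ⟨v1, v2⟩ | ⟨v1, v2⟩ <;> linarith
  · intro i hi j hmax hj
    obtain ⟨pI, hpIn, hiv⟩ : ∃ p, p < n ∧ i = a + (p : Fin n) :=
      ⟨(i - a).val, (i - a).isLt, hsub i⟩
    obtain ⟨pJ, hpJn, hjv⟩ : ∃ p, p < n ∧ j = a + (p : Fin n) :=
      ⟨(j - a).val, (j - a).isLt, hsub j⟩
    have hpIk : pI ≤ k := by
      have h := (mem_arcSet_iff a k hkn i).1 hi
      rw [hiv, add_sub_cancel_left, Fin.val_cast_of_lt hpIn] at h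
      exact h
    have hpJk : pJ ≤ k := by
      have h := (mem_arcSet_iff a k hkn j).1 hj
      rw [hjv, add_sub_cancel_left, Fin.val_cast_of_lt hpJn] at h
      exact h
    have ha' : arcRev n a k (a + ((k + 1 : ℕ) : Fin n)) = a + ((k + 1 : ℕ) : Fin n) :=
      arcRev_not_mem a k _ (not_mem_arc a k (k + 1) hkn (by omega) (by omega))
    have hb' : arcRev n a k (a + ((n - 1 : ℕ) : Fin n)) = a + ((n - 1 : ℕ) : Fin n) :=
      arcRev_not_mem a k _ (not_mem_arc a k (n - 1) hkn (by omega) (by omega))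
    have hssi : arcRev n a k (a + ((k - pI : ℕ) : Fin n)) = i := by
      rw [arcRev_mem a k hkn (k - pI) (by omega), show k - (k - pI) = pI by omega]
      exact hiv.symm
    have hssj : arcRev n a k (a + ((k - pJ : ℕ) : Fin n)) = j := by
      rw [arcRev_mem a k hkn (k - pJ) (by omega), show k - (k - pJ) = pJ by omega]
      exact hjv.symm
    rcases Nat.lt_trichotomy pI pJ with h | h | h
    · have hQ1 := cyc4 a (k + 1) (n - 1) pI pJ (by omega) (by omega) hpIn hpJn (by omega)
      rw [← hiv, ← hjv] at hQ1
      have hS := hR _ _ _ _ hQ1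
      have hQ2 := cyc4 a (n - 1) (k - pJ) (k - pI) (k + 1)
        (by omega) (by omega) (by omega) (by omega) (by omega)
      have hE := hrev _ _ _ _ hQ2
      dsimp only at hE
      rw [hssj, hssi, ha', hb'] at hE
      have m1 := hmax (a + ((k + 1 : ℕ) : Fin n))
      have m2 := hmax (a + ((n - 1 : ℕ) : Fin n))
      have e1 := hD.1 j i
      have e2 := hD.1 (a + ((k + 1 : ℕ) : Fin n)) i
      have e3 := hD.1 (a + ((n - 1 : ℕ) : Fin n)) i
      rcases min_cases (D (a + ((n - 1 : ℕ) : Fin n)) i) (D i j) with ⟨u1, u2⟩ | ⟨u1, u2⟩ <;>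
        rcases min_cases (D j i) (D i (a + ((k + 1 : ℕ) : Fin n))) with ⟨v1, v2⟩ | ⟨v1, v2⟩ <;>
          linarith
    · exact row_pos D hD.2.1 hR a k hk1 hk3 i (fun y => by
        have hy := hmax y
        have hij : i = j := by rw [hiv, hjv, h]
        rw [← hij, hD.2.2] at hy
        exact hy)
    · have hQ1 := cyc4 a (n - 1) pJ pI (k + 1) (by omega) hpJn hpIn (by omega) (by omega)
      rw [← hiv, ← hjv] at hQ1
      have hS := hR _ _ _ _ hQ1
      have hQ2 := cyc4 a (k + 1) (n - 1) (k - pI) (k - pJ)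
        (by omega) (by omega) (by omega) (by omega) (by omega)
      have hE := hrev _ _ _ _ hQ2
      dsimp only at hE
      rw [hssi, hssj, ha', hb'] at hE
      have m1 := hmax (a + ((k + 1 : ℕ) : Fin n))
      have m2 := hmax (a + ((n - 1 : ℕ) : Fin n))
      have e1 := hD.1 j i
      have e2 := hD.1 (a + ((k + 1 : ℕ) : Fin n)) i
      have e3 := hD.1 (a + ((n - 1 : ℕ) : Fin n)) i
      rcases min_cases (D j i) (D i (a + ((k + 1 : ℕ) : Fin n))) with ⟨u1, u2⟩ | ⟨u1, u2⟩ <;>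
        rcases min_cases (D (a + ((n - 1 : ℕ) : Fin n)) i) (D i j) with ⟨v1, v2⟩ | ⟨v1, v2⟩ <;>
          linarith
end

section
/- Let D be an n×n strict circular Robinson dissimilarity matrix, and let I and J be disjoint arcs of [n], each containing at least 2 and at most n−2 elements. If both matrices (i,j) ↦ D(σ_I(i), σ_I(j)) and (i,j) ↦ D(σ_J(i), σ_J(j)) are circular Robinson, then J = Iᶜ. (In particular, among any family of pairwise disjoint arcs of size at least 2 no two of which are complementary, at most one arc reversal can produce a Robinson ordering.) -/
/-! ### Auxiliary lemmas -/

open Fin.NatCast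
open Fin.CommRing

private lemma mod_dich (x N : ℕ) (h0 : 0 < N) (h : x < 2 * N) :
    x % N = x ∨ x % N + N = x := by
  rcases Nat.lt_or_ge x N with h1 | h1
  · left; exact Nat.mod_eq_of_lt h1
  · right; rw [Nat.mod_eq_sub_mod h1, Nat.mod_eq_of_lt (by omega)]; omega

private lemma add_val_dich {n : ℕ} [NeZero n] (b : Fin n) (t : ℕ) (ht : t < n) :
    (b + (t : Fin n)).val = b.val + t ∨ (b + (t : Fin n)).val + n = b.val + t := by
  have h1 : (b + (t : Fin n)).val = (b.val + t) % n := by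
    rw [Fin.add_def, Fin.val_natCast]
    conv_rhs => rw [Nat.add_mod, Nat.mod_eq_of_lt b.isLt]
  rw [h1]
  exact mod_dich _ n (by omega) (by have := b.isLt; omega)

private lemma cyc4_s14 {n : ℕ} [NeZero n] (b : Fin n) (t₁ t₂ t₃ : ℕ)
    (h1 : 0 < t₁) (h12 : t₁ < t₂) (h23 : t₂ < t₃) (h3 : t₃ < n) :
    CycOrd4 b (b + (t₁ : Fin n)) (b + (t₂ : Fin n)) (b + (t₃ : Fin n)) := by
  have d1 := add_val_dich b t₁ (by omega)
  have d2 := add_val_dich b t₂ (by omega)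
  have d3 := add_val_dich b t₃ h3
  have l1 := (b + (t₁ : Fin n)).isLt
  have l2 := (b + (t₂ : Fin n)).isLt
  have l3 := (b + (t₃ : Fin n)).isLt
  have lb := b.isLt
  simp only [CycOrd4, CycOrd, Fin.lt_def, ne_eq, Fin.ext_iff]
  generalize hg1 : (b + (t₁ : Fin n)).val = x1 at d1 l1 ⊢
  generalize hg2 : (b + (t₂ : Fin n)).val = x2 at d2 l2 ⊢
  generalize hg3 : (b + (t₃ : Fin n)).val = x3 at d3 l3 ⊢
  generalize hgb : b.val = xb at d1 d2 d3 lb ⊢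
  omega

private lemma mem_arc {n : ℕ} [NeZero n] {b : Fin n} {k : ℕ} (hk : k < n) (x : Fin n) :
    x ∈ arcSet n b k ↔ (x - b).val ≤ k := by
  constructor
  · rintro ⟨t, ht, rfl⟩
    have h : (b + (t : Fin n)) - b = (t : Fin n) := by ring
    rw [h, Fin.val_natCast]
    exact le_trans (Nat.mod_le t n) ht
  · intro h
    exact ⟨(x - b).val, h, by rw [Fin.cast_val_eq_self]; ring⟩

private lemma arcRev_notMem {n : ℕ} [NeZero n] {b : Fin n} {k : ℕ} {x : Fin n}
    (hx : x ∉ arcSet n b k) : arcRev n b k x = x := by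
  rw [arcRev, if_neg]
  exact hx

private lemma arcRev_left {n : ℕ} [NeZero n] (b : Fin n) (k : ℕ) :
    arcRev n b k b = b + (k : Fin n) := by
  rw [arcRev, if_pos ⟨0, Nat.zero_le k, by simp⟩]
  rw [sub_self, sub_zero]

private lemma arcRev_right {n : ℕ} [NeZero n] (b : Fin n) (k : ℕ) :
    arcRev n b k (b + (k : Fin n)) = b := by
  rw [arcRev, if_pos ⟨k, le_refl k, rfl⟩]
  ring

private lemma pt_eq {n : ℕ} [NeZero n] (b : Fin n) (s t u : ℕ) (h : s + t = u) :
    (b + (s : Fin n)) + (t : Fin n) = b + (u : Fin n) := by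
  rw [add_assoc, ← Nat.cast_add, h]

private lemma pt_eq' {n : ℕ} [NeZero n] (b : Fin n) (s t u : ℕ) (h : s + t = n + u) :
    (b + (s : Fin n)) + (t : Fin n) = b + (u : Fin n) := by
  rw [add_assoc, ← Nat.cast_add, h, Nat.cast_add, Fin.natCast_self, zero_add]

private lemma pt_eq_self {n : ℕ} [NeZero n] (b : Fin n) (s t : ℕ) (h : s + t = n) :
    (b + (s : Fin n)) + (t : Fin n) = b := by
  rw [add_assoc, ← Nat.cast_add, h, Fin.natCast_self, add_zero]

private lemma sub_val {n : ℕ} [NeZero n] (b : Fin n) (s t : ℕ) (ht : t ≤ n) :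
    ((b + (s : Fin n)) - (b + (t : Fin n))).val = (s + (n - t)) % n := by
  have h0 : ((n - t : ℕ) : Fin n) = -(t : Fin n) := by
    rw [eq_neg_iff_add_eq_zero, ← Nat.cast_add, Nat.sub_add_cancel ht, Fin.natCast_self]
  have h1 : (b + (s : Fin n)) - (b + (t : Fin n)) = ((s + (n - t) : ℕ) : Fin n) := by
    rw [Nat.cast_add, h0]; ring
  rw [h1, Fin.val_natCast]

private lemma sub_val0 {n : ℕ} [NeZero n] (b : Fin n) (s : ℕ) (hs : s < n) :
    ((b + (s : Fin n)) - b).val = s := by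
  have h : (b + (s : Fin n)) - b = (s : Fin n) := by ring
  rw [h, Fin.val_natCast, Nat.mod_eq_of_lt hs]

private lemma sub_val'' {n : ℕ} [NeZero n] (b : Fin n) (t : ℕ) (ht0 : 0 < t) (ht : t < n) :
    (b - (b + (t : Fin n))).val = n - t := by
  have h0 : ((n - t : ℕ) : Fin n) = -(t : Fin n) := by
    rw [eq_neg_iff_add_eq_zero, ← Nat.cast_add, Nat.sub_add_cancel ht.le, Fin.natCast_self]
  have h : b - (b + (t : Fin n)) = ((n - t : ℕ) : Fin n) := by rw [h0]; ring
  rw [h, Fin.val_natCast, Nat.mod_eq_of_lt (by omega)]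

private lemma minlt {A B E : ℝ} (h1 : min E B < A) (h2 : min E A ≤ B) : E < A := by
  rcases lt_or_ge E A with h | h
  · exact h
  · rw [min_eq_right h] at h2
    exact absurd h1 (not_lt.2 (le_min h h2))

/-- Key lemma: if `D` is strict circular Robinson and reversing the arc `b..b+k`
yields a circular Robinson matrix, then for points `u, v` outside the arc forming a
cyclically ordered quadruple with the endpoints, `D u v < D b u` and
`D u v < D (b+k) v`. -/
private lemma key {n : ℕ} [NeZero n] {D : Fin n → Fin n → ℝ} (hsym : ∀ i j, D i j = D j i)
    (hR : StrictCircRobinson D) {b : Fin n} {k : ℕ}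
    (hI : CircRobinson fun i j => D (arcRev n b k i) (arcRev n b k j))
    {u v : Fin n} (hu : u ∉ arcSet n b k) (hv : v ∉ arcSet n b k)
    (h4 : CycOrd4 b (b + (k : Fin n)) u v) (h4' : CycOrd4 (b + (k : Fin n)) u v b) :
    D u v < D b u ∧ D u v < D (b + (k : Fin n)) v := by
  have s1 := hR b (b + (k : Fin n)) u v h4
  have s2 := hR (b + (k : Fin n)) u v b h4'
  have r1 := hI b (b + (k : Fin n)) u v h4
  have r2 := hI (b + (k : Fin n)) u v b h4'
  simp only [arcRev_left, arcRev_right, arcRev_notMem hu, arcRev_notMem hv] at r1 r2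
  constructor
  · rw [min_comm] at s1 r1
    exact minlt s1 r1
  · rw [hsym v b] at s2
    rw [hsym v (b + (k : Fin n))] at r2
    exact minlt s2 r2

/-- For a strict circular Robinson matrix, among two disjoint arcs of size between
2 and n-2, if reversing either of them yields a circular Robinson matrix then the
two arcs are complementary. -/
theorem statement14 (n : ℕ) [NeZero n] (D : Fin n → Fin n → ℝ)
    (hD : IsDissim D) (hR : StrictCircRobinson D)
    (a c : Fin n) (k m : ℕ)
    (hk1 : 1 ≤ k) (hk2 : k + 1 ≤ n - 2) (hm1 : 1 ≤ m) (hm2 : m + 1 ≤ n - 2)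
    (hdisj : Disjoint (arcSet n a k) (arcSet n c m))
    (hI : CircRobinson fun i j => D (arcRev n a k i) (arcRev n a k j))
    (hJ : CircRobinson fun i j => D (arcRev n c m i) (arcRev n c m j)) :
    arcSet n c m = (arcSet n a k)ᶜ := by
  obtain ⟨hsym, -, -⟩ := hD
  have hkn : k < n := by omega
  have hmn : m < n := by omega
  obtain ⟨d, hdn, hc⟩ : ∃ d : ℕ, d < n ∧ c = a + (d : Fin n) :=
    ⟨(c - a).val, (c - a).isLt, by rw [Fin.cast_val_eq_self]; ring⟩
  have hkd : k < d := by
    by_contra h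
    push_neg at h
    exact (Set.disjoint_left.1 hdisj ⟨d, h, hc⟩) ⟨0, Nat.zero_le m, by simp⟩
  have hdm : d + m < n := by
    by_contra h
    push_neg at h
    refine (Set.disjoint_left.1 hdisj
      (show a ∈ arcSet n a k from ⟨0, Nat.zero_le k, by simp⟩)) ⟨n - d, by omega, ?_⟩
    rw [hc, pt_eq_self a d (n - d) (by omega)]
  by_cases hcrit : d = k + 1 ∧ d + m + 1 = n
  · -- the arcs are complementary
    ext x
    obtain ⟨e, hen, hx⟩ : ∃ e : ℕ, e < n ∧ x = a + (e : Fin n) :=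
      ⟨(x - a).val, (x - a).isLt, by rw [Fin.cast_val_eq_self]; ring⟩
    subst hx
    simp only [Set.mem_compl_iff, mem_arc hkn, mem_arc hmn]
    rw [hc, sub_val a e d hdn.le, sub_val0 a e hen]
    have hlt := Nat.mod_lt (e + (n - d)) (show 0 < n by omega)
    have hdich := mod_dich (e + (n - d)) n (by omega) (by omega)
    omega
  · exfalso
    have hδ : c + (m : Fin n) = a + ((d + m : ℕ) : Fin n) := by
      rw [hc]; exact pt_eq a d m (d + m) rfl
    rcases (by omega : k + 1 < d ∨ d + m + 1 < n) with hgap | hgap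
    · -- gap between a+k and c : use p = a + (k+1)
      have hPI : (a + ((k + 1 : ℕ) : Fin n)) ∉ arcSet n a k := by
        intro hmem
        have h := (mem_arc hkn _).1 hmem
        rw [sub_val0 a (k + 1) (by omega)] at h
        omega
      have hδI : (a + ((d + m : ℕ) : Fin n)) ∉ arcSet n a k := by
        intro hmem
        have h := (mem_arc hkn _).1 hmem
        rw [sub_val0 a (d + m) (by omega)] at h
        omega
      have haJ : a ∉ arcSet n c m := by
        intro hmem
        have h := (mem_arc hmn _).1 hmem
        rw [hc, sub_val'' a d (by omega) hdn] at h
        omega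
      have hPJ : (a + ((k + 1 : ℕ) : Fin n)) ∉ arcSet n c m := by
        intro hmem
        have h := (mem_arc hmn _).1 hmem
        rw [hc, sub_val a (k + 1) d hdn.le, Nat.mod_eq_of_lt (by omega)] at h
        omega
      have q1 : CycOrd4 a (a + (k : Fin n)) (a + ((k + 1 : ℕ) : Fin n))
          (a + ((d + m : ℕ) : Fin n)) :=
        cyc4_s14 a k (k + 1) (d + m) (by omega) (by omega) (by omega) (by omega)
      have q2 : CycOrd4 (a + (k : Fin n)) (a + ((k + 1 : ℕ) : Fin n))
          (a + ((d + m : ℕ) : Fin n)) a := by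
        have h := cyc4_s14 (a + (k : Fin n)) 1 (d + m - k) (n - k)
          (by omega) (by omega) (by omega) (by omega)
        rw [pt_eq a k 1 (k + 1) rfl, pt_eq a k (d + m - k) (d + m) (by omega),
          pt_eq_self a k (n - k) (by omega)] at h
        exact h
      obtain ⟨key1, -⟩ := key hsym hR hI hPI hδI q1 q2
      have q3 : CycOrd4 c (c + (m : Fin n)) a (a + ((k + 1 : ℕ) : Fin n)) := by
        have h := cyc4_s14 c m (n - d) (n - d + k + 1)
          (by omega) (by omega) (by omega) (by omega)
        have e1 : c + ((n - d : ℕ) : Fin n) = a := by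
          rw [hc]; exact pt_eq_self a d (n - d) (by omega)
        have e2 : c + ((n - d + k + 1 : ℕ) : Fin n) = a + ((k + 1 : ℕ) : Fin n) := by
          rw [hc]; exact pt_eq' a d (n - d + k + 1) (k + 1) (by omega)
        rw [e1, e2] at h
        exact h
      have q4 : CycOrd4 (c + (m : Fin n)) a (a + ((k + 1 : ℕ) : Fin n)) c := by
        have h := cyc4_s14 (c + (m : Fin n)) (n - d - m) (n - d - m + k + 1) (n - m)
          (by omega) (by omega) (by omega) (by omega)
        have e1 : (c + (m : Fin n)) + ((n - d - m : ℕ) : Fin n) = a := by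
          rw [hδ]; exact pt_eq_self a (d + m) (n - d - m) (by omega)
        have e2 : (c + (m : Fin n)) + ((n - d - m + k + 1 : ℕ) : Fin n)
            = a + ((k + 1 : ℕ) : Fin n) := by
          rw [hδ]; exact pt_eq' a (d + m) (n - d - m + k + 1) (k + 1) (by omega)
        have e3 : (c + (m : Fin n)) + ((n - m : ℕ) : Fin n) = c := by
          rw [hδ, hc]; exact pt_eq' a (d + m) (n - m) d (by omega)
        rw [e1, e2, e3] at h
        exact h
      obtain ⟨-, key2⟩ := key hsym hR hJ haJ hPJ q3 q4
      rw [hδ] at key2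
      have hs := hsym (a + ((k + 1 : ℕ) : Fin n)) (a + ((d + m : ℕ) : Fin n))
      linarith
    · -- gap after c+m : use p = a + (d+m+1)
      have hpJ : (a + ((d + m + 1 : ℕ) : Fin n)) ∉ arcSet n c m := by
        intro hmem
        have h := (mem_arc hmn _).1 hmem
        rw [hc, sub_val a (d + m + 1) d hdn.le,
          show (d + m + 1) + (n - d) = n + (m + 1) by omega, Nat.add_mod_left,
          Nat.mod_eq_of_lt (by omega)] at h
        omega
      have hβJ : (a + (k : Fin n)) ∉ arcSet n c m := by
        intro hmem
        have h := (mem_arc hmn _).1 hmem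
        rw [hc, sub_val a k d hdn.le, Nat.mod_eq_of_lt (by omega)] at h
        omega
      have hcI : c ∉ arcSet n a k := by
        intro hmem
        have h := (mem_arc hkn _).1 hmem
        rw [hc, sub_val0 a d hdn] at h
        omega
      have hpI : (a + ((d + m + 1 : ℕ) : Fin n)) ∉ arcSet n a k := by
        intro hmem
        have h := (mem_arc hkn _).1 hmem
        rw [sub_val0 a (d + m + 1) (by omega)] at h
        omega
      have q1 : CycOrd4 c (c + (m : Fin n)) (a + ((d + m + 1 : ℕ) : Fin n))
          (a + (k : Fin n)) := by
        have h := cyc4_s14 c m (m + 1) (n - d + k)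
          (by omega) (by omega) (by omega) (by omega)
        have e1 : c + ((m + 1 : ℕ) : Fin n) = a + ((d + m + 1 : ℕ) : Fin n) := by
          rw [hc]; exact pt_eq a d (m + 1) (d + m + 1) (by omega)
        have e2 : c + ((n - d + k : ℕ) : Fin n) = a + (k : Fin n) := by
          rw [hc]; exact pt_eq' a d (n - d + k) k (by omega)
        rw [e1, e2] at h
        exact h
      have q2 : CycOrd4 (c + (m : Fin n)) (a + ((d + m + 1 : ℕ) : Fin n))
          (a + (k : Fin n)) c := by
        have h := cyc4_s14 (c + (m : Fin n)) 1 (n - d - m + k) (n - m)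
          (by omega) (by omega) (by omega) (by omega)
        have e1 : (c + (m : Fin n)) + ((1 : ℕ) : Fin n) = a + ((d + m + 1 : ℕ) : Fin n) := by
          rw [hδ]; exact pt_eq a (d + m) 1 (d + m + 1) rfl
        have e2 : (c + (m : Fin n)) + ((n - d - m + k : ℕ) : Fin n) = a + (k : Fin n) := by
          rw [hδ]; exact pt_eq' a (d + m) (n - d - m + k) k (by omega)
        have e3 : (c + (m : Fin n)) + ((n - m : ℕ) : Fin n) = c := by
          rw [hδ, hc]; exact pt_eq' a (d + m) (n - m) d (by omega)
        rw [e1, e2, e3] at h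
        exact h
      obtain ⟨key1, -⟩ := key hsym hR hJ hpJ hβJ q1 q2
      have q3 : CycOrd4 a (a + (k : Fin n)) c (a + ((d + m + 1 : ℕ) : Fin n)) := by
        have h := cyc4_s14 a k d (d + m + 1) (by omega) (by omega) (by omega) (by omega)
        rw [← hc] at h
        exact h
      have q4 : CycOrd4 (a + (k : Fin n)) c (a + ((d + m + 1 : ℕ) : Fin n)) a := by
        have h := cyc4_s14 (a + (k : Fin n)) (d - k) (d + m + 1 - k) (n - k)
          (by omega) (by omega) (by omega) (by omega)
        have e1 : (a + (k : Fin n)) + ((d - k : ℕ) : Fin n) = c := by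
          rw [hc]; exact pt_eq a k (d - k) d (by omega)
        have e2 : (a + (k : Fin n)) + ((d + m + 1 - k : ℕ) : Fin n)
            = a + ((d + m + 1 : ℕ) : Fin n) :=
          pt_eq a k (d + m + 1 - k) (d + m + 1) (by omega)
        have e3 : (a + (k : Fin n)) + ((n - k : ℕ) : Fin n) = a :=
          pt_eq_self a k (n - k) (by omega)
        rw [e1, e2, e3] at h
        exact h
      obtain ⟨-, key2⟩ := key hsym hR hI hcI hpI q3 q4
      have hs := hsym (a + ((d + m + 1 : ℕ) : Fin n)) (a + (k : Fin n))
      linarith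
end
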